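/- Let k ≥ ℓ ≥ 2, k ≥ 3, n > k + ℓ. Suppose F ⊆ C([n],k) and G ⊆ C([2ℓ],ℓ) are non-trivial and cross-intersecting (where sets in G are viewed as subsets of [n]). Then |F| + |G| ≤ C(n,k) − 2·C(n−ℓ,k) + C(n−2ℓ,k) + 2, with strict inequality unless |G| = 2. -/

import Mathlib

open Finset

namespace Stmt14Aux

variable {α : Type*} [DecidableEq α]

lemma double_count (X : Finset α) (D : Finset (Finset α)) (E : α → Finset (Finset α))
    (hE : ∀ x ∈ X, E x ⊆ D) :
    ∑ x ∈ X, (E x).card = ∑ T ∈ D, (X.filter (fun x => T ∈ E x)).card := by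
  have h1 : ∀ x ∈ X, (E x).card = (D.filter (fun T => T ∈ E x)).card := by
    intro x hx
    rw [Finset.filter_mem_eq_inter, Finset.inter_eq_right.mpr (hE x hx)]
  calc ∑ x ∈ X, (E x).card = ∑ x ∈ X, (D.filter (fun T => T ∈ E x)).card :=
        Finset.sum_congr rfl h1
    _ = ∑ x ∈ X, ∑ T ∈ D, if T ∈ E x then 1 else 0 := by
        refine Finset.sum_congr rfl fun x _ => ?_
        rw [Finset.card_filter]
    _ = ∑ T ∈ D, ∑ x ∈ X, if T ∈ E x then 1 else 0 := Finset.sum_comm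
    _ = ∑ T ∈ D, (X.filter (fun x => T ∈ E x)).card := by
        refine Finset.sum_congr rfl fun T _ => ?_
        rw [Finset.card_filter]

/-- The auxiliary family: s-subsets of X \ B x containing x. -/
noncomputable def Efam (B : α → Finset α) (X : Finset α) (s : ℕ) (x : α) : Finset (Finset α) :=
  (((X \ B x).erase x).powersetCard (s-1)).image (insert x)

lemma mem_Efam {X : Finset α} {s : ℕ} {B : α → Finset α} {x : α} (hxB : x ∉ B x) (hxX : x ∈ X)
    (hs : 1 ≤ s) {T : Finset α} (hT : T ∈ Efam B X s x) :
    x ∈ T ∧ T ⊆ X \ B x ∧ T.card = s := by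
  obtain ⟨T', hT', rfl⟩ := Finset.mem_image.mp hT
  obtain ⟨hT'sub, hT'card⟩ := Finset.mem_powersetCard.mp hT'
  have hxT' : x ∉ T' := fun h => (Finset.mem_erase.mp (hT'sub h)).1 rfl
  refine ⟨Finset.mem_insert_self _ _, ?_, ?_⟩
  · apply Finset.insert_subset
    · exact Finset.mem_sdiff.mpr ⟨hxX, hxB⟩
    · exact hT'sub.trans (Finset.erase_subset _ _)
  · rw [Finset.card_insert_of_notMem hxT', hT'card]
    omega

lemma card_Efam {l s : ℕ} {X : Finset α} {B : α → Finset α} {x : α} (hX : X.card = 2*l)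
    (hxB : x ∉ B x) (hxX : x ∈ X) (hBX : B x ⊆ X) (hBcard : (B x).card = l) :
    (Efam B X s x).card = (l-1).choose (s-1) := by
  have hxmem : x ∈ X \ B x := Finset.mem_sdiff.mpr ⟨hxX, hxB⟩
  have hcard1 : ((X \ B x).erase x).card = l - 1 := by
    rw [Finset.card_erase_of_mem hxmem, Finset.card_sdiff_of_subset hBX, hX, hBcard]
    omega
  rw [Efam, Finset.card_image_of_injOn, Finset.card_powersetCard, hcard1]
  intro T1 h1 T2 h2 heq
  have hx1 : x ∉ T1 := fun h => (Finset.mem_erase.mp ((Finset.mem_powersetCard.mp h1).1 h)).1 rfl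
  have hx2 : x ∉ T2 := fun h => (Finset.mem_erase.mp ((Finset.mem_powersetCard.mp h2).1 h)).1 rfl
  rw [← Finset.erase_insert hx1, heq, Finset.erase_insert hx2]

lemma lemA {l s : ℕ} {X : Finset α} {G : Finset (Finset α)} (hs : 1 ≤ s) (hsl : s ≤ l)
    (hX : X.card = 2*l)
    (hGm : ∀ B ∈ G, B ⊆ X ∧ B.card = l)
    (hnt : ∀ x : α, ∃ B ∈ G, x ∉ B) :
    2 * l.choose s ≤ ((X.powersetCard s).filter (fun T => ∃ B ∈ G, Disjoint T B)).card := by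
  classical
  choose B hBG hBx using hnt
  set D := (X.powersetCard s).filter (fun T => ∃ B ∈ G, Disjoint T B) with hD
  have hED : ∀ x ∈ X, Efam B X s x ⊆ D := by
    intro x hx T hT
    obtain ⟨hxT, hTsub, hTcard⟩ := mem_Efam (hBx x) hx hs hT
    refine Finset.mem_filter.mpr ⟨Finset.mem_powersetCard.mpr ⟨hTsub.trans (Finset.sdiff_subset), hTcard⟩, B x, hBG x, ?_⟩
    exact Finset.disjoint_left.mpr (fun a ha => (Finset.mem_sdiff.mp (hTsub ha)).2)
  have hdc := double_count X D (Efam B X s) hED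
  have hcardE : ∀ x ∈ X, (Efam B X s x).card = (l-1).choose (s-1) := fun x hx =>
    card_Efam hX (hBx x) hx ((hGm _ (hBG x)).1) ((hGm _ (hBG x)).2)
  have hlhs : ∑ x ∈ X, (Efam B X s x).card = 2 * l * ((l-1).choose (s-1)) := by
    rw [Finset.sum_congr rfl hcardE, Finset.sum_const, hX, smul_eq_mul]
  have hrhs : ∑ T ∈ D, (X.filter (fun x => T ∈ Efam B X s x)).card ≤ D.card * s := by
    have := Finset.sum_le_card_nsmul D (fun T => (X.filter (fun x => T ∈ Efam B X s x)).card) s ?_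
    · simpa using this
    · intro T hT
      obtain ⟨hTpc, -⟩ := Finset.mem_filter.mp hT
      obtain ⟨hTX, hTcard⟩ := Finset.mem_powersetCard.mp hTpc
      calc (X.filter (fun x => T ∈ Efam B X s x)).card ≤ T.card := by
            apply Finset.card_le_card
            intro x hx
            obtain ⟨hxX, hxE⟩ := Finset.mem_filter.mp hx
            exact (mem_Efam (hBx x) hxX hs hxE).1
        _ = s := hTcard
  have hineq : 2 * l * ((l-1).choose (s-1)) ≤ D.card * s := by
    rw [← hlhs]; rw [hdc]; exact hrhs
  have hid : l * ((l-1).choose (s-1)) = l.choose s * s := by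
    have := Nat.add_one_mul_choose_eq (l-1) (s-1)
    have h1 : l - 1 + 1 = l := by omega
    have h2 : s - 1 + 1 = s := by omega
    rw [h1, h2] at this
    exact this
  have : 2 * l.choose s * s ≤ D.card * s := by
    calc 2 * l.choose s * s = 2 * (l * ((l-1).choose (s-1))) := by rw [hid]; ring
      _ = 2 * l * ((l-1).choose (s-1)) := by ring
      _ ≤ D.card * s := hineq
  exact Nat.le_of_mul_le_mul_right this (by omega)

lemma lemB {l : ℕ} {X : Finset α} {G : Finset (Finset α)} (hX : X.card = 2*l)
    (hGm : ∀ B ∈ G, B ⊆ X ∧ B.card = l) :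
    G.card ≤ ((X.powersetCard l).filter (fun T => ∃ B ∈ G, Disjoint T B)).card := by
  apply Finset.card_le_card_of_injOn (fun B => X \ B)
  · intro Bb hBb
    refine Finset.mem_filter.mpr ⟨Finset.mem_powersetCard.mpr ⟨Finset.sdiff_subset, ?_⟩, Bb, hBb, Finset.sdiff_disjoint⟩
    rw [Finset.card_sdiff_of_subset (hGm Bb hBb).1, hX, (hGm Bb hBb).2]
    omega
  · intro B1 h1 B2 h2 heq
    have e1 : X \ (X \ B1) = B1 := Finset.sdiff_sdiff_eq_self (hGm B1 h1).1
    have e2 : X \ (X \ B2) = B2 := Finset.sdiff_sdiff_eq_self (hGm B2 h2).1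
    rw [← e1, ← e2]
    simp only at heq
    rw [heq]

lemma lemC {l : ℕ} {X : Finset α} {G : Finset (Finset α)} (hl : 3 ≤ l) (hX : X.card = 2*l)
    (hGm : ∀ B ∈ G, B ⊆ X ∧ B.card = l)
    (hnt : ∀ x : α, ∃ B ∈ G, x ∉ B) (hm : 3 ≤ G.card) :
    2*l + 1 ≤ ((X.powersetCard (l-1)).filter (fun T => ∃ B ∈ G, Disjoint T B)).card := by
  classical
  by_contra hcon
  push_neg at hcon
  set D := (X.powersetCard (l-1)).filter (fun T => ∃ B ∈ G, Disjoint T B) with hD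
  have hchoosel : l.choose (l-1) = l := by
    have h1 := Nat.choose_symm (show 1 ≤ l by omega)
    rw [Nat.choose_one_right] at h1
    exact h1
  have hA : 2*l ≤ D.card := by
    have := lemA (show 1 ≤ l-1 by omega) (show l-1 ≤ l by omega) hX hGm hnt
    rwa [hchoosel] at this
  have hDcard : D.card = 2*l := by omega
  choose B hBG hBx using hnt
  have hs1 : 1 ≤ l - 1 := by omega
  have hED : ∀ x ∈ X, Efam B X (l-1) x ⊆ D := by
    intro x hx T hT
    obtain ⟨hxT, hTsub, hTcard⟩ := mem_Efam (hBx x) hx hs1 hT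
    refine Finset.mem_filter.mpr ⟨Finset.mem_powersetCard.mpr ⟨hTsub.trans Finset.sdiff_subset, hTcard⟩, B x, hBG x, ?_⟩
    exact Finset.disjoint_left.mpr (fun a ha => (Finset.mem_sdiff.mp (hTsub ha)).2)
  have hdc := double_count X D (Efam B X (l-1)) hED
  have hchoosel2 : (l-1).choose (l-1-1) = l-1 := by
    have h1 := Nat.choose_symm (show 1 ≤ l-1 by omega)
    rw [Nat.choose_one_right] at h1
    exact h1
  have hlhs : ∑ x ∈ X, (Efam B X (l-1) x).card = 2 * l * (l-1) := by
    have hcardE : ∀ x ∈ X, (Efam B X (l-1) x).card = l-1 := fun x hx => by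
      rw [card_Efam hX (hBx x) hx ((hGm _ (hBG x)).1) ((hGm _ (hBG x)).2), hchoosel2]
    rw [Finset.sum_congr rfl hcardE, Finset.sum_const, hX, smul_eq_mul]
  have hsubT : ∀ T ∈ D, (X.filter (fun x => T ∈ Efam B X (l-1) x)) ⊆ T := by
    intro T hT x hx
    obtain ⟨hxX, hxE⟩ := Finset.mem_filter.mp hx
    exact (mem_Efam (hBx x) hxX hs1 hxE).1
  have hTcard : ∀ T ∈ D, T.card = l - 1 := fun T hT =>
    (Finset.mem_powersetCard.mp (Finset.mem_filter.mp hT).1).2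
  have hTX : ∀ T ∈ D, T ⊆ X := fun T hT =>
    (Finset.mem_powersetCard.mp (Finset.mem_filter.mp hT).1).1
  have hle : ∀ T ∈ D, (X.filter (fun x => T ∈ Efam B X (l-1) x)).card ≤ l - 1 := by
    intro T hT
    calc (X.filter (fun x => T ∈ Efam B X (l-1) x)).card ≤ T.card :=
          Finset.card_le_card (hsubT T hT)
      _ = l - 1 := hTcard T hT
  have hsum : ∑ T ∈ D, (X.filter (fun x => T ∈ Efam B X (l-1) x)).card = ∑ T ∈ D, (l-1) := by
    rw [← hdc, hlhs, Finset.sum_const, hDcard, smul_eq_mul]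
  have hall : ∀ T ∈ D, (X.filter (fun x => T ∈ Efam B X (l-1) x)).card = l - 1 := by
    by_contra hno
    push_neg at hno
    obtain ⟨T0, hT0, hne⟩ := hno
    have hlt : (X.filter (fun x => T0 ∈ Efam B X (l-1) x)).card < l - 1 :=
      lt_of_le_of_ne (hle T0 hT0) hne
    have := Finset.sum_lt_sum (fun T hT => hle T hT) ⟨T0, hT0, hlt⟩
    omega
  have hkey : ∀ T ∈ D, ∀ x ∈ T, T ⊆ X \ B x := by
    intro T hT x hxT
    have heqset : (X.filter (fun x => T ∈ Efam B X (l-1) x)) = T :=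
      Finset.eq_of_subset_of_card_le (hsubT T hT)
        (by rw [hall T hT, hTcard T hT])
    have hxX : x ∈ X := hTX T hT hxT
    have hmem : T ∈ Efam B X (l-1) x := by
      have hxf : x ∈ (X.filter (fun x => T ∈ Efam B X (l-1) x)) := by
        rw [heqset]; exact hxT
      exact (Finset.mem_filter.mp hxf).2
    exact (mem_Efam (hBx x) hxX hs1 hmem).2.1
  have hclaim : ∀ Bb ∈ G, ∀ x ∈ X \ Bb, Bb = B x := by
    intro Bb hBb x hxS
    set S := X \ Bb with hS
    have hScard : S.card = l := by
      rw [hS, Finset.card_sdiff_of_subset (hGm Bb hBb).1, hX, (hGm Bb hBb).2]; omega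
    have herase : (S.erase x).card = l - 1 := by
      rw [Finset.card_erase_of_mem hxS, hScard]
    obtain ⟨z1, hz1, z2, hz2, hz12⟩ := Finset.one_lt_card.mp
      (show 1 < (S.erase x).card by omega)
    have hmemD : ∀ z ∈ S.erase x, S.erase z ∈ D := by
      intro z hz
      have hzS : z ∈ S := Finset.mem_of_mem_erase hz
      refine Finset.mem_filter.mpr ⟨Finset.mem_powersetCard.mpr
        ⟨(Finset.erase_subset _ _).trans Finset.sdiff_subset, by
          rw [Finset.card_erase_of_mem hzS, hScard]⟩, Bb, hBb, ?_⟩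
      exact Finset.disjoint_left.mpr (fun a ha =>
        (Finset.mem_sdiff.mp (Finset.mem_of_mem_erase ha)).2)
    have hxT1 : x ∈ S.erase z1 :=
      Finset.mem_erase.mpr ⟨fun h => (Finset.mem_erase.mp hz1).1 h.symm, hxS⟩
    have hxT2 : x ∈ S.erase z2 :=
      Finset.mem_erase.mpr ⟨fun h => (Finset.mem_erase.mp hz2).1 h.symm, hxS⟩
    have h1 := hkey _ (hmemD z1 hz1) x hxT1
    have h2 := hkey _ (hmemD z2 hz2) x hxT2
    have hSsub : S ⊆ X \ B x := by
      intro a ha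
      by_cases haz : a = z1
      · exact h2 (Finset.mem_erase.mpr ⟨haz ▸ hz12, ha⟩)
      · exact h1 (Finset.mem_erase.mpr ⟨haz, ha⟩)
    have hBsub : B x ⊆ Bb := by
      intro a ha
      have haX : a ∈ X := (hGm _ (hBG x)).1 ha
      by_contra hab
      have : a ∈ X \ B x := hSsub (Finset.mem_sdiff.mpr ⟨haX, hab⟩)
      exact (Finset.mem_sdiff.mp this).2 ha
    exact (Finset.eq_of_subset_of_card_le hBsub
      (by rw [(hGm _ (hBG x)).2, (hGm Bb hBb).2])).symm
  obtain ⟨B1, hB1⟩ := Finset.card_pos.mp (show 0 < G.card by omega)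
  have h2card : 2 ≤ (G.erase B1).card := by
    rw [Finset.card_erase_of_mem hB1]; omega
  obtain ⟨B2, hB2e⟩ := Finset.card_pos.mp (show 0 < (G.erase B1).card by omega)
  have h3card : 1 ≤ ((G.erase B1).erase B2).card := by
    rw [Finset.card_erase_of_mem hB2e]; omega
  obtain ⟨B3, hB3e⟩ := Finset.card_pos.mp (show 0 < ((G.erase B1).erase B2).card by omega)
  have hB2 : B2 ∈ G := Finset.mem_of_mem_erase hB2e
  have hB3 : B3 ∈ G := Finset.mem_of_mem_erase (Finset.mem_of_mem_erase hB3e)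
  have h12 : B1 ≠ B2 := fun h => (Finset.mem_erase.mp hB2e).1 h.symm
  have h23 : B2 ≠ B3 := fun h => (Finset.mem_erase.mp hB3e).1 h.symm
  have h13 : B1 ≠ B3 := fun h => (Finset.mem_erase.mp (Finset.mem_of_mem_erase hB3e)).1 h.symm
  have hcompl : ∀ Ba ∈ G, ∀ Bb ∈ G, Ba ≠ Bb → Bb = X \ Ba := by
    intro Ba hBa Bb hBb hne
    have hcover : ∀ x ∈ X, x ∈ Ba ∨ x ∈ Bb := by
      intro x hx
      by_contra hcc
      push_neg at hcc
      have e1 := hclaim Ba hBa x (Finset.mem_sdiff.mpr ⟨hx, hcc.1⟩)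
      have e2 := hclaim Bb hBb x (Finset.mem_sdiff.mpr ⟨hx, hcc.2⟩)
      exact hne (e1.trans e2.symm)
    have hUeq : Ba ∪ Bb = X := by
      apply Finset.Subset.antisymm (Finset.union_subset (hGm Ba hBa).1 (hGm Bb hBb).1)
      exact fun x hx => Finset.mem_union.mpr (hcover x hx)
    have hinter : Ba ∩ Bb = ∅ := by
      apply Finset.card_eq_zero.mp
      have hcui := Finset.card_union_add_card_inter Ba Bb
      rw [hUeq, hX, (hGm Ba hBa).2, (hGm Bb hBb).2] at hcui
      omega
    have hsub : Bb ⊆ X \ Ba := by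
      intro a ha
      have haX : a ∈ X := (hGm Bb hBb).1 ha
      refine Finset.mem_sdiff.mpr ⟨haX, fun haBa => ?_⟩
      have : a ∈ Ba ∩ Bb := Finset.mem_inter.mpr ⟨haBa, ha⟩
      rw [hinter] at this
      exact Finset.notMem_empty a this
    exact (Finset.eq_of_subset_of_card_le hsub (by
      rw [Finset.card_sdiff_of_subset (hGm Ba hBa).1, hX, (hGm Ba hBa).2, (hGm Bb hBb).2]
      omega))
  have e2 := hcompl B1 hB1 B2 hB2 h12
  have e3 := hcompl B1 hB1 B3 hB3 h13
  exact h23 (e2.trans e3.symm)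

lemma vdm {l N k : ℕ} (hlk : l ≤ k) :
    ∑ s ∈ Finset.range (l+1), l.choose s * N.choose (k-s) = (l+N).choose k := by
  rw [Nat.add_choose_eq, Finset.Nat.sum_antidiagonal_eq_sum_range_succ_mk]
  apply Finset.sum_subset (Finset.range_subset_range.mpr (by omega))
  intro i hi hni
  have : l < i := by
    simp only [Finset.mem_range] at hni ⊢
    omega
  rw [Nat.choose_eq_zero_of_lt this, zero_mul]

lemma union_inter_eq {X Y T A : Finset α} (hXY : Disjoint X Y) (hT : T ⊆ X) (hA : A ⊆ Y) :
    (T ∪ A) ∩ X = T := by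
  ext a
  simp only [Finset.mem_inter, Finset.mem_union]
  constructor
  · rintro ⟨h1 | h1, h2⟩
    · exact h1
    · exact absurd h2 (Finset.disjoint_right.mp hXY (hA h1))
  · intro h
    exact ⟨Or.inl h, hT h⟩

lemma union_sdiff_eq {X Y T A : Finset α} (hXY : Disjoint X Y) (hT : T ⊆ X) (hA : A ⊆ Y) :
    (T ∪ A) \ X = A := by
  ext a
  simp only [Finset.mem_sdiff, Finset.mem_union]
  constructor
  · rintro ⟨h1 | h1, h2⟩
    · exact absurd (hT h1) h2
    · exact h1
  · intro h
    exact ⟨Or.inr h, Finset.disjoint_right.mp hXY (hA h)⟩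

lemma cardU {k : ℕ} (X Y : Finset α) (hXY : Disjoint X Y) (Dall : Finset (Finset α))
    (hDX : ∀ T ∈ Dall, T ⊆ X) :
    ((Dall.biUnion (fun T => (Y.powersetCard (k - T.card)).image (fun A => T ∪ A))).card)
      = ∑ T ∈ Dall, Y.card.choose (k - T.card) := by
  rw [Finset.card_biUnion]
  · refine Finset.sum_congr rfl fun T hT => ?_
    rw [Finset.card_image_of_injOn, Finset.card_powersetCard]
    intro A1 h1 A2 h2 heq
    have hY1 : A1 ⊆ Y := (Finset.mem_powersetCard.mp h1).1
    have hY2 : A2 ⊆ Y := (Finset.mem_powersetCard.mp h2).1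
    have e1 := union_sdiff_eq hXY (hDX T hT) hY1
    have e2 := union_sdiff_eq hXY (hDX T hT) hY2
    simp only at heq
    rw [← e1, ← e2, heq]
  · intro T1 h1 T2 h2 hne
    apply Finset.disjoint_left.mpr
    intro u hu1 hu2
    obtain ⟨A1, hA1, rfl⟩ := Finset.mem_image.mp hu1
    obtain ⟨A2, hA2, he⟩ := Finset.mem_image.mp hu2
    have hY1 : A1 ⊆ Y := (Finset.mem_powersetCard.mp hA1).1
    have hY2 : A2 ⊆ Y := (Finset.mem_powersetCard.mp hA2).1
    have e1 := union_inter_eq hXY (hDX T1 h1) hY1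
    have e2 := union_inter_eq hXY (hDX T2 h2) hY2
    apply hne
    rw [← e1, ← e2, he]

end Stmt14Aux

set_option maxHeartbeats 2000000 in
/-- Proposition 4.3: cross-intersecting non-trivial F ⊆ C([n],k),
G ⊆ C([2ℓ],ℓ). -/
theorem stmt14 (n k l : ℕ) (hl : 2 ≤ l) (hlk : l ≤ k) (hk : 3 ≤ k)
    (hn : k + l < n)
    (F G : Finset (Finset ℕ))
    (hF : F ⊆ (Finset.Icc 1 n).powersetCard k)
    (hG : G ⊆ (Finset.Icc 1 (2 * l)).powersetCard l)
    (hcross : ∀ A ∈ F, ∀ B ∈ G, (A ∩ B).Nonempty)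
    (hntF : ∀ x : ℕ, ∃ A ∈ F, x ∉ A)
    (hntG : ∀ x : ℕ, ∃ B ∈ G, x ∉ B) :
    (F.card + G.card : ℤ) ≤
        (n.choose k : ℤ) - 2 * (n - l).choose k + (n - 2 * l).choose k + 2 ∧
    (G.card ≠ 2 →
      (F.card + G.card : ℤ) <
        (n.choose k : ℤ) - 2 * (n - l).choose k + (n - 2 * l).choose k + 2) := by
  classical
  set X : Finset ℕ := Finset.Icc 1 (2*l) with hXdef
  set Y : Finset ℕ := Finset.Icc (2*l+1) n with hYdef
  have hXcard : X.card = 2*l := by rw [hXdef, Nat.card_Icc]; omega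
  have hYcard : Y.card = n - 2*l := by rw [hYdef, Nat.card_Icc]; omega
  have hXY : Disjoint X Y := by
    rw [Finset.disjoint_left]
    intro a ha hb
    rw [hXdef, Finset.mem_Icc] at ha
    rw [hYdef, Finset.mem_Icc] at hb
    omega
  have hGm : ∀ B ∈ G, B ⊆ X ∧ B.card = l := fun B hB => Finset.mem_powersetCard.mp (hG hB)
  -- G has at least two elements
  have hm2 : 2 ≤ G.card := by
    obtain ⟨B0, hB0, -⟩ := hntG 0
    have hB0pos : 0 < B0.card := by rw [(hGm B0 hB0).2]; omega
    obtain ⟨b, hb⟩ := Finset.card_pos.mp hB0pos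
    obtain ⟨B1, hB1, hbB1⟩ := hntG b
    apply Finset.one_lt_card.mpr
    exact ⟨B0, hB0, B1, hB1, fun h => hbB1 (h ▸ hb)⟩
  set Dall : Finset (Finset ℕ) := X.powerset.filter (fun T => ∃ B ∈ G, Disjoint T B) with hDall
  set U : Finset (Finset ℕ) :=
    Dall.biUnion (fun T => (Y.powersetCard (k - T.card)).image (fun A => T ∪ A)) with hU
  have hDX : ∀ T ∈ Dall, T ⊆ X := fun T hT => Finset.mem_powerset.mp (Finset.mem_filter.mp hT).1
  have hDcardle : ∀ T ∈ Dall, T.card ≤ l := by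
    intro T hT
    obtain ⟨-, B, hB, hdisj⟩ := Finset.mem_filter.mp hT
    have hsub : T ⊆ X \ B := Finset.subset_sdiff.mpr ⟨hDX T hT, hdisj⟩
    calc T.card ≤ (X \ B).card := Finset.card_le_card hsub
      _ = l := by rw [Finset.card_sdiff_of_subset (hGm B hB).1, hXcard, (hGm B hB).2]; omega
  -- d s
  set d : ℕ → ℕ := fun s => ((X.powersetCard s).filter (fun T => ∃ B ∈ G, Disjoint T B)).card
    with hd
  -- card of U
  have hUcard : U.card = ∑ s ∈ Finset.range (l+1), d s * (n - 2*l).choose (k - s) := by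
    rw [hU, Stmt14Aux.cardU X Y hXY Dall hDX, hYcard]
    rw [← Finset.sum_fiberwise_of_maps_to (g := fun T : Finset ℕ => T.card)
      (fun T hT => Finset.mem_range.mpr (Nat.lt_succ_of_le (hDcardle T hT)))]
    refine Finset.sum_congr rfl fun s hs => ?_
    have hinner : ∀ T ∈ Dall.filter (fun T => T.card = s),
        (n - 2*l).choose (k - T.card) = (n - 2*l).choose (k - s) := by
      intro T hT
      rw [(Finset.mem_filter.mp hT).2]
    rw [Finset.sum_congr rfl hinner, Finset.sum_const, smul_eq_mul]
    congr 1
    rw [hd]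
    congr 1
    rw [hDall, Finset.filter_comm, ← Finset.powersetCard_eq_filter]
  -- U is inside the k-sets of [n], disjoint from F
  have hUsub : U ⊆ (Finset.Icc 1 n).powersetCard k := by
    intro u hu
    obtain ⟨T, hT, hu2⟩ := Finset.mem_biUnion.mp hu
    obtain ⟨A, hA, rfl⟩ := Finset.mem_image.mp hu2
    obtain ⟨hAY, hAcard⟩ := Finset.mem_powersetCard.mp hA
    refine Finset.mem_powersetCard.mpr ⟨?_, ?_⟩
    · apply Finset.union_subset
      · exact (hDX T hT).trans (by rw [hXdef]; exact Finset.Icc_subset_Icc le_rfl (by omega))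
      · exact hAY.trans (by rw [hYdef]; exact Finset.Icc_subset_Icc (by omega) le_rfl)
    · rw [Finset.card_union_of_disjoint
        (Finset.disjoint_of_subset_left (hDX T hT)
          (Finset.disjoint_of_subset_right hAY hXY)), hAcard]
      have := hDcardle T hT
      omega
  have hFU : Disjoint F U := by
    rw [Finset.disjoint_left]
    intro A' hA'F hA'U
    obtain ⟨T, hT, hu2⟩ := Finset.mem_biUnion.mp hA'U
    obtain ⟨A, hA, rfl⟩ := Finset.mem_image.mp hu2
    obtain ⟨hAY, -⟩ := Finset.mem_powersetCard.mp hA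
    obtain ⟨-, B, hBG, hdisj⟩ := Finset.mem_filter.mp hT
    obtain ⟨a, ha⟩ := hcross _ hA'F B hBG
    rw [Finset.mem_inter] at ha
    rcases Finset.mem_union.mp ha.1 with h | h
    · exact Finset.disjoint_left.mp hdisj h ha.2
    · exact Finset.disjoint_left.mp hXY ((hGm B hBG).1 ha.2) (hAY h)
  have hFUcard : F.card + U.card ≤ n.choose k := by
    calc F.card + U.card = (F ∪ U).card := (Finset.card_union_of_disjoint hFU).symm
      _ ≤ ((Finset.Icc 1 n).powersetCard k).card :=
          Finset.card_le_card (Finset.union_subset hF hUsub)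
      _ = n.choose k := by rw [Finset.card_powersetCard, Nat.card_Icc, Nat.add_sub_cancel]
  -- lower bounds on d
  have hnt' : ∀ x : ℕ, ∃ B ∈ G, x ∉ B := hntG
  have hds : ∀ s, 1 ≤ s → s ≤ l → 2 * l.choose s ≤ d s := by
    intro s h1 h2
    exact Stmt14Aux.lemA h1 h2 hXcard hGm hnt'
  have hdl : G.card ≤ d l := Stmt14Aux.lemB hXcard hGm
  have hd0 : 1 ≤ d 0 := by
    apply Finset.card_pos.mpr
    obtain ⟨B0, hB0, -⟩ := hntG 0
    exact ⟨∅, Finset.mem_filter.mpr ⟨Finset.mem_powersetCard.mpr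
      ⟨Finset.empty_subset _, Finset.card_empty⟩, B0, hB0, Finset.disjoint_empty_left _⟩⟩
  -- weights
  set N : ℕ := n - 2*l with hN
  have hNge : k - l + 1 ≤ N := by omega
  have hwl1 : 1 ≤ N.choose (k - l) := Nat.choose_pos (by omega)
  -- key assembly
  have hvdm : ∑ s ∈ Finset.range (l+1), l.choose s * N.choose (k-s) = (n-l).choose k := by
    have := Stmt14Aux.vdm (l := l) (N := N) (k := k) hlk
    rw [show l + N = n - l by omega] at this
    exact this
  have hpeel : ∀ f : ℕ → ℕ, ∑ s ∈ Finset.range (l+1), f s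
      = f 0 + (∑ i ∈ Finset.range (l-1), f (i+1)) + f l := by
    intro f
    have h1 : l + 1 = (l - 1 + 1) + 1 := by omega
    have h2 : l - 1 + 1 = l := by omega
    rw [h1, Finset.sum_range_succ, Finset.sum_range_succ', h2]
    ring
  have hmidbase : ∑ i ∈ Finset.range (l-1), 2 * (l.choose (i+1) * N.choose (k-(i+1)))
      ≤ ∑ i ∈ Finset.range (l-1), d (i+1) * N.choose (k-(i+1)) := by
    apply Finset.sum_le_sum
    intro i hi
    have hi' : i + 1 ≤ l := by
      have := Finset.mem_range.mp hi; omega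
    calc 2 * (l.choose (i+1) * N.choose (k-(i+1)))
        = (2 * l.choose (i+1)) * N.choose (k-(i+1)) := by ring
      _ ≤ d (i+1) * N.choose (k-(i+1)) := Nat.mul_le_mul_right _ (hds (i+1) (by omega) hi')
  have key : ∀ e : ℕ, (e = 0 ∨ (e = 1 ∧ 3 ≤ G.card)) →
      2 * ((n-l).choose k) + (G.card - 2) + e ≤ U.card + N.choose k := by
    intro e he
    rw [hUcard, ← hvdm, Finset.mul_sum]
    rw [hpeel (fun s => 2 * (l.choose s * N.choose (k-s))),
        hpeel (fun s => d s * N.choose (k-s))]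
    simp only [Nat.choose_zero_right, Nat.choose_self, Nat.sub_zero, one_mul]
    -- goal now:
    -- 2 * N.choose k + mid2 + 2 * N.choose (k-l) + (G.card - 2) + e
    --   ≤ d 0 * N.choose k + midd + d l * N.choose (k-l) + N.choose k
    have h0 : N.choose k ≤ d 0 * N.choose k := Nat.le_mul_of_pos_left _ (by omega)
    rcases he with rfl | ⟨rfl, hm3⟩
    · -- non-strict
      have hlast : 2 * N.choose (k-l) + (G.card - 2) ≤ d l * N.choose (k-l) := by
        have e1 : 2 * N.choose (k-l) + (G.card - 2) * N.choose (k-l) = G.card * N.choose (k-l) := by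
          rw [← Nat.add_mul]
          congr 1
          omega
        calc 2 * N.choose (k-l) + (G.card - 2)
            ≤ 2 * N.choose (k-l) + (G.card - 2) * N.choose (k-l) :=
              Nat.add_le_add_left (Nat.le_mul_of_pos_right _ (by omega)) _
          _ = G.card * N.choose (k-l) := e1
          _ ≤ d l * N.choose (k-l) := Nat.mul_le_mul_right _ hdl
      linarith [h0, hmidbase, hlast]
    · -- strict: split on l < k or l = k
      rcases lt_or_eq_of_le hlk with hlk' | hlk'
      · -- l < k : weight at level l is at least 2
        have hwl2 : 2 ≤ N.choose (k-l) := by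
          have h1 : (k-l+1).choose (k-l) ≤ N.choose (k-l) := Nat.choose_le_choose _ hNge
          rw [Nat.choose_succ_self_right] at h1
          omega
        have hlast : 2 * N.choose (k-l) + (G.card - 2) + 1 ≤ d l * N.choose (k-l) := by
          have e1 : 2 * N.choose (k-l) + (G.card - 2) * N.choose (k-l) = G.card * N.choose (k-l) := by
            rw [← Nat.add_mul]
            congr 1
            omega
          have e2 : (G.card - 2) + 1 ≤ (G.card - 2) * 2 := by omega
          have e3 : (G.card - 2) * 2 ≤ (G.card - 2) * N.choose (k-l) :=
            Nat.mul_le_mul_left _ hwl2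
          calc 2 * N.choose (k-l) + (G.card - 2) + 1
              ≤ 2 * N.choose (k-l) + (G.card - 2) * N.choose (k-l) := by
                have := le_trans e2 e3
                omega
            _ = G.card * N.choose (k-l) := e1
            _ ≤ d l * N.choose (k-l) := Nat.mul_le_mul_right _ hdl
        linarith [h0, hmidbase, hlast]
      · -- l = k : extra unit from level l-1
        have hl3 : 3 ≤ l := by omega
        have hdl1 : 2*l + 1 ≤ d (l-1) := Stmt14Aux.lemC hl3 hXcard hGm hnt' hm3
        have hNpos : 1 ≤ N := by omega
        have hwl1' : N.choose (k - (l-1)) = N := by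
          rw [show k - (l-1) = 1 by omega, Nat.choose_one_right]
        have hmid : ∑ i ∈ Finset.range (l-1), 2 * (l.choose (i+1) * N.choose (k-(i+1))) + 1
            ≤ ∑ i ∈ Finset.range (l-1), d (i+1) * N.choose (k-(i+1)) := by
          have hpeel2 : ∀ f : ℕ → ℕ, ∑ i ∈ Finset.range (l-1), f i
              = (∑ i ∈ Finset.range (l-2), f i) + f (l-2) := by
            intro f
            have h1 : l - 1 = (l - 2) + 1 := by omega
            rw [h1, Finset.sum_range_succ]
          rw [hpeel2 (fun i => 2 * (l.choose (i+1) * N.choose (k-(i+1)))),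
              hpeel2 (fun i => d (i+1) * N.choose (k-(i+1)))]
          have hbase2 : ∑ i ∈ Finset.range (l-2), 2 * (l.choose (i+1) * N.choose (k-(i+1)))
              ≤ ∑ i ∈ Finset.range (l-2), d (i+1) * N.choose (k-(i+1)) := by
            apply Finset.sum_le_sum
            intro i hi
            have hi' : i + 1 ≤ l := by
              have := Finset.mem_range.mp hi; omega
            have := hds (i+1) (by omega) hi'
            calc 2 * (l.choose (i+1) * N.choose (k-(i+1)))
                = (2 * l.choose (i+1)) * N.choose (k-(i+1)) := by ring
              _ ≤ d (i+1) * N.choose (k-(i+1)) := Nat.mul_le_mul_right _ this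
          have htop : 2 * (l.choose (l-2+1) * N.choose (k-(l-2+1))) + 1
              ≤ d (l-2+1) * N.choose (k-(l-2+1)) := by
            have he1 : l - 2 + 1 = l - 1 := by omega
            rw [he1]
            have hch : l.choose (l-1) = l := by
              have h1 := Nat.choose_symm (show 1 ≤ l by omega)
              rw [Nat.choose_one_right] at h1
              exact h1
            rw [hch, hwl1']
            calc 2 * (l * N) + 1 ≤ (2*l+1) * N := by nlinarith
              _ ≤ d (l-1) * N := Nat.mul_le_mul_right _ hdl1
          linarith [hbase2, htop]
        have hlast : 2 * N.choose (k-l) + (G.card - 2) ≤ d l * N.choose (k-l) := by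
          have e1 : 2 * N.choose (k-l) + (G.card - 2) * N.choose (k-l) = G.card * N.choose (k-l) := by
            rw [← Nat.add_mul]
            congr 1
            omega
          calc 2 * N.choose (k-l) + (G.card - 2)
              ≤ 2 * N.choose (k-l) + (G.card - 2) * N.choose (k-l) :=
                Nat.add_le_add_left (Nat.le_mul_of_pos_right _ (by omega)) _
            _ = G.card * N.choose (k-l) := e1
            _ ≤ d l * N.choose (k-l) := Nat.mul_le_mul_right _ hdl
        omega
  -- conclude
  have hkey0 := key 0 (Or.inl rfl)
  constructor
  · have h1 : (F.card : ℤ) + U.card ≤ (n.choose k : ℤ) := by exact_mod_cast hFUcard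
    have h2 : 2 * ((n-l).choose k : ℤ) + ((G.card : ℤ) - 2) ≤ (U.card : ℤ) + (N.choose k : ℤ) := by
      have := hkey0
      zify [hm2] at this
      omega
    have hNk : ((N.choose k : ℕ) : ℤ) = ((n - 2*l).choose k : ℤ) := by rw [hN]
    omega
  · intro hne
    have hm3 : 3 ≤ G.card := by omega
    have hkey1 := key 1 (Or.inr ⟨rfl, hm3⟩)
    have h1 : (F.card : ℤ) + U.card ≤ (n.choose k : ℤ) := by exact_mod_cast hFUcard
    have h2 : 2 * ((n-l).choose k : ℤ) + ((G.card : ℤ) - 2) + 1 ≤ (U.card : ℤ) + (N.choose k : ℤ) := by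
      have := hkey1
      zify [hm2] at this
      omega
    have hNk : ((N.choose k : ℕ) : ℤ) = ((n - 2*l).choose k : ℤ) := by rw [hN]
    omega
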